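/- Let f : ℝ → ℂ be a differentiable function. Then the function x ↦ (x + i)·f(x) is operator Lipschitz if and only if f is a multiplier of the operator Lipschitz functions, i.e., for every operator Lipschitz function h : ℝ → ℂ, the product function x ↦ f(x)·h(x) is operator Lipschitz. -/

import Mathlib

open Complex

universe u

/-- Functional calculus `g(A)` for `g : ℝ → ℂ` and a (self-adjoint, hence normal)
bounded operator `A`, obtained by applying `z ↦ g (Re z)` to `A` via the continuous
functional calculus. -/
noncomputable def opFC {H : Type u} [NormedAddCommGroup H] [InnerProductSpace ℂ H]
    [CompleteSpace H] (g : ℝ → ℂ) (A : H →L[ℂ] H) : H →L[ℂ] H :=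
  cfc (fun z : ℂ => g z.re) A

/-- A function `g : ℝ → ℂ` is operator Lipschitz if there is `C ≥ 0` such that
`‖g(A) − g(B)‖ ≤ C ‖A − B‖` for all bounded self-adjoint operators `A, B` on every
complex Hilbert space. -/
def OperatorLipschitz (g : ℝ → ℂ) : Prop :=
  ∃ C : ℝ, 0 ≤ C ∧ ∀ (H : Type u) (_ : NormedAddCommGroup H) (_ : InnerProductSpace ℂ H)
    (_ : CompleteSpace H) (A B : H →L[ℂ] H), IsSelfAdjoint A → IsSelfAdjoint B →
    ‖opFC g A - opFC g B‖ ≤ C * ‖A - B‖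

noncomputable instance : Inner ℂ (ULift.{u} ℂ) := ⟨fun x y => inner ℂ x.down y.down⟩

noncomputable instance : InnerProductSpace ℂ (ULift.{u} ℂ) where
  norm_sq_eq_re_inner x := norm_sq_eq_re_inner (𝕜 := ℂ) x.down
  conj_inner_symm x y := inner_conj_symm (𝕜 := ℂ) x.down y.down
  add_left x y z := inner_add_left (𝕜 := ℂ) x.down y.down z.down
  smul_left x y c := inner_smul_left (𝕜 := ℂ) x.down y.down c

section OpFCLemmas

variable {H : Type u} [NormedAddCommGroup H] [InnerProductSpace ℂ H] [CompleteSpace H]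

lemma opFC_congr {g₁ g₂ : ℝ → ℂ} (hg : ∀ x, g₁ x = g₂ x) (A : H →L[ℂ] H) :
    opFC g₁ A = opFC g₂ A := by
  unfold opFC
  exact cfc_congr fun z _ => hg z.re

lemma opFC_mul (g₁ g₂ : ℝ → ℂ) (h1 : Continuous g₁) (h2 : Continuous g₂)
    (A : H →L[ℂ] H) (hA : IsSelfAdjoint A) :
    opFC (fun x => g₁ x * g₂ x) A = opFC g₁ A * opFC g₂ A := by
  have := hA.isStarNormal
  exact cfc_mul _ _ A ((h1.comp continuous_re).continuousOn)
    ((h2.comp continuous_re).continuousOn)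

lemma opFC_add_I (A : H →L[ℂ] H) (hA : IsSelfAdjoint A) :
    opFC (fun x : ℝ => (x : ℂ) + I) A = A + I • 1 := by
  have := hA.isStarNormal
  unfold opFC
  rw [cfc_congr (g := fun z : ℂ => z + I)
    (fun z hz => show (z.re : ℂ) + I = z + I by rw [← hA.mem_spectrum_eq_re hz])]
  rw [cfc_add (a := A) (fun z : ℂ => z) (fun _ => I), cfc_id' ℂ A, cfc_const I A,
    Algebra.algebraMap_eq_smul_one]

lemma norm_opFC_le {g : ℝ → ℂ} {c : ℝ} (hc : 0 ≤ c) (hg : ∀ x : ℝ, ‖g x‖ ≤ c)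
    (A : H →L[ℂ] H) : ‖opFC g A‖ ≤ c :=
  norm_cfc_le hc fun z _ => hg z.re

end OpFCLemmas

lemma xI_ne_zero (x : ℝ) : (x : ℂ) + I ≠ 0 := by
  intro h0
  have := congrArg Complex.im h0
  simp at this

lemma one_le_norm_xI (x : ℝ) : 1 ≤ ‖(x : ℂ) + I‖ := by
  have h : ‖(x : ℂ) + I‖ = Real.sqrt (x ^ 2 + 1 ^ 2) := by
    rw [show (x : ℂ) + I = (x : ℂ) + (1 : ℝ) * I by simp]
    exact Complex.norm_add_mul_I x 1
  rw [h]
  nlinarith [Real.sq_sqrt (show (0:ℝ) ≤ x ^ 2 + 1 ^ 2 by positivity),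
    Real.sqrt_nonneg (x ^ 2 + 1 ^ 2), sq_nonneg x]

lemma abs_le_norm_xI (x : ℝ) : |x| ≤ ‖(x : ℂ) + I‖ := by
  have h : ‖(x : ℂ) + I‖ = Real.sqrt (x ^ 2 + 1 ^ 2) := by
    rw [show (x : ℂ) + I = (x : ℂ) + (1 : ℝ) * I by simp]
    exact Complex.norm_add_mul_I x 1
  rw [h, show |x| = Real.sqrt (x ^ 2) by rw [Real.sqrt_sq_eq_abs]]
  apply Real.sqrt_le_sqrt
  nlinarith

/-- Scalar consequence of operator Lipschitzness, obtained on the one-dimensional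
Hilbert space `ULift ℂ`. -/
lemma scalar_lip {g : ℝ → ℂ} {C : ℝ} (_hC : 0 ≤ C)
    (h : ∀ (H : Type u) (_ : NormedAddCommGroup H) (_ : InnerProductSpace ℂ H)
      (_ : CompleteSpace H) (A B : H →L[ℂ] H), IsSelfAdjoint A → IsSelfAdjoint B →
      ‖opFC g A - opFC g B‖ ≤ C * ‖A - B‖) (a b : ℝ) :
    ‖g a - g b‖ ≤ C * |a - b| := by
  set E := ULift.{u} ℂ
  have sa : ∀ t : ℝ, IsSelfAdjoint (algebraMap ℂ (E →L[ℂ] E) (t : ℂ)) := by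
    intro t
    rw [IsSelfAdjoint, ← algebraMap_star_comm]
    simp
  have key := h E inferInstance inferInstance inferInstance
    (algebraMap ℂ (E →L[ℂ] E) (a : ℂ)) (algebraMap ℂ (E →L[ℂ] E) (b : ℂ)) (sa a) (sa b)
  have e1 : ∀ t : ℝ, opFC g (algebraMap ℂ (E →L[ℂ] E) (t : ℂ)) = algebraMap ℂ _ (g t) := by
    intro t
    unfold opFC
    rw [cfc_algebraMap]
    simp
  rw [e1 a, e1 b, ← map_sub, ← map_sub, norm_algebraMap', norm_algebraMap'] at key
  simpa [← Complex.ofReal_sub, Complex.norm_real] using key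

lemma div_xI_bound {g : ℝ → ℂ} {C : ℝ} (hC : 0 ≤ C)
    (hg : ∀ a b : ℝ, ‖g a - g b‖ ≤ C * |a - b|) (x : ℝ) :
    ‖g x / ((x : ℂ) + I)‖ ≤ ‖g 0‖ + C := by
  have hne := xI_ne_zero x
  have h1 := one_le_norm_xI x
  have h2 := abs_le_norm_xI x
  have hx : ‖g x‖ ≤ ‖g 0‖ + C * |x| := by
    have := hg x 0
    simp only [sub_zero] at this
    calc ‖g x‖ = ‖g 0 + (g x - g 0)‖ := by ring_nf
      _ ≤ ‖g 0‖ + ‖g x - g 0‖ := norm_add_le _ _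
      _ ≤ ‖g 0‖ + C * |x| := by linarith
  rw [norm_div]
  rw [div_le_iff₀ (lt_of_lt_of_le one_pos h1)]
  have hd : ‖g 0‖ + C ≤ (‖g 0‖ + C) * ‖(x : ℂ) + I‖ := by
    nlinarith [norm_nonneg (g 0)]
  nlinarith [norm_nonneg (g 0), abs_nonneg x, norm_nonneg (g x)]

/-- Lipschitz scalar bound gives continuity. -/
lemma cont_of_lip {g : ℝ → ℂ} {C : ℝ} (hC : 0 ≤ C)
    (hg : ∀ a b : ℝ, ‖g a - g b‖ ≤ C * |a - b|) : Continuous g := by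
  refine (LipschitzWith.of_dist_le_mul (K := ⟨C, hC⟩) fun a b => ?_).continuous
  simp only [dist_eq_norm, Real.dist_eq]
  exact hg a b

/-- Theorem 4.1, equivalence (b) ⇔ (c): for a differentiable `f : ℝ → ℂ`, the function
`x ↦ (x + i) f x` is operator Lipschitz if and only if `f` is a multiplier of the
operator Lipschitz functions, i.e. `f·h` is operator Lipschitz for every operator
Lipschitz `h`. -/
theorem stmt6 (f : ℝ → ℂ) (hf : Differentiable ℝ f) :
    OperatorLipschitz.{u} (fun x : ℝ => ((x : ℂ) + I) * f x) ↔
      ∀ h : ℝ → ℂ, OperatorLipschitz.{u} h →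
        OperatorLipschitz.{u} (fun x : ℝ => f x * h x) := by
  set k : ℝ → ℂ := fun x => ((x : ℂ) + I) * f x with hk_def
  constructor
  · -- (b) ⇒ (c)
    rintro ⟨Ck, hCk0, hCk⟩ h ⟨Ch, hCh0, hCh⟩
    -- scalar Lipschitz bounds
    have kLip : ∀ a b : ℝ, ‖k a - k b‖ ≤ Ck * |a - b| := scalar_lip hCk0 hCk
    have hLip : ∀ a b : ℝ, ‖h a - h b‖ ≤ Ch * |a - b| := scalar_lip hCh0 hCh
    have h_cont : Continuous h := cont_of_lip hCh0 hLip
    have f_cont : Continuous f := hf.continuous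
    have k_cont : Continuous k := by
      apply Continuous.mul _ f_cont
      exact (Complex.continuous_ofReal.add continuous_const)
    set r : ℝ → ℂ := fun y => h y / ((y : ℂ) + I) with hr_def
    have r_cont : Continuous r := by
      apply h_cont.div (Complex.continuous_ofReal.add continuous_const)
      exact fun x => xI_ne_zero x
    set Mf : ℝ := ‖k 0‖ + Ck with hMf_def
    set Mh : ℝ := ‖h 0‖ + Ch with hMh_def
    have hMf0 : 0 ≤ Mf := add_nonneg (norm_nonneg _) hCk0
    have hMh0 : 0 ≤ Mh := add_nonneg (norm_nonneg _) hCh0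
    have f_bound : ∀ x : ℝ, ‖f x‖ ≤ Mf := by
      intro x
      have := div_xI_bound hCk0 kLip x
      rwa [show k x / ((x : ℂ) + I) = f x from
        mul_div_cancel_left₀ _ (xI_ne_zero x)] at this
    have r_bound : ∀ y : ℝ, ‖r y‖ ≤ Mh := fun y => div_xI_bound hCh0 hLip y
    refine ⟨Mf * Ch + Ck * Mh + Mf * Mh, by positivity, ?_⟩
    intro H _ _ _ A B hA hB
    set FA := opFC f A
    set HA := opFC h A
    set HB := opFC h B
    set KA := opFC k A
    set KB := opFC k B
    set RB := opFC r B
    -- key operator identity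
    have eA : opFC (fun x => f x * h x) A = FA * HA := opFC_mul f h f_cont h_cont A hA
    have eB : opFC (fun x => f x * h x) B = KB * RB := by
      rw [opFC_congr (g₂ := fun x => k x * r x) (fun x => by
        show f x * h x = ((x : ℂ) + I) * f x * (h x / ((x : ℂ) + I))
        rw [show ((x : ℂ) + I) * f x * (h x / ((x : ℂ) + I))
            = f x * h x * (((x : ℂ) + I) / ((x : ℂ) + I)) by ring,
          div_self (xI_ne_zero x), mul_one]) B]
      exact opFC_mul k r k_cont r_cont B hB
    have eHB : HB = (B + I • 1) * RB := by
      have : opFC h B = opFC (fun y => ((y : ℂ) + I) * r y) B := by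
        apply opFC_congr
        intro y
        show h y = ((y : ℂ) + I) * (h y / ((y : ℂ) + I))
        rw [show ((y : ℂ) + I) * (h y / ((y : ℂ) + I))
            = h y * (((y : ℂ) + I) / ((y : ℂ) + I)) by ring,
          div_self (xI_ne_zero y), mul_one]
      rw [show HB = opFC h B from rfl, this,
        opFC_mul (fun y : ℝ => (y : ℂ) + I) r (Complex.continuous_ofReal.add continuous_const) r_cont B hB,
        opFC_add_I B hB]
    have eKA : KA = FA * (A + I • 1) := by
      have : opFC k A = opFC (fun x => f x * ((x : ℂ) + I)) A := by
        apply opFC_congr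
        intro x
        rw [hk_def]; ring
      rw [show KA = opFC k A from rfl, this,
        opFC_mul f (fun y : ℝ => (y : ℂ) + I) f_cont (Complex.continuous_ofReal.add continuous_const) A hA,
        opFC_add_I A hA]
    have identity : opFC (fun x => f x * h x) A - opFC (fun x => f x * h x) B
        = FA * (HA - HB) + (KA - KB) * RB - FA * (A - B) * RB := by
      rw [eA, eB, eHB, eKA]
      noncomm_ring
    -- norm estimates
    have nFA : ‖FA‖ ≤ Mf := norm_opFC_le hMf0 f_bound A
    have nRB : ‖RB‖ ≤ Mh := norm_opFC_le hMh0 r_bound B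
    have nH : ‖HA - HB‖ ≤ Ch * ‖A - B‖ := hCh H _ _ _ A B hA hB
    have nK : ‖KA - KB‖ ≤ Ck * ‖A - B‖ := hCk H _ _ _ A B hA hB
    rw [identity]
    have nAB : (0:ℝ) ≤ ‖A - B‖ := norm_nonneg _
    calc ‖FA * (HA - HB) + (KA - KB) * RB - FA * (A - B) * RB‖
        ≤ ‖FA * (HA - HB) + (KA - KB) * RB‖ + ‖FA * (A - B) * RB‖ := norm_sub_le _ _
      _ ≤ ‖FA * (HA - HB)‖ + ‖(KA - KB) * RB‖ + ‖FA * (A - B) * RB‖ := by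
          have := norm_add_le (FA * (HA - HB)) ((KA - KB) * RB)
          linarith
      _ ≤ ‖FA‖ * ‖HA - HB‖ + ‖KA - KB‖ * ‖RB‖ + ‖FA‖ * ‖A - B‖ * ‖RB‖ := by
          have t1 := norm_mul_le FA (HA - HB)
          have t2 := norm_mul_le (KA - KB) RB
          have t3 : ‖FA * (A - B) * RB‖ ≤ ‖FA‖ * ‖A - B‖ * ‖RB‖ := by
            calc ‖FA * (A - B) * RB‖ ≤ ‖FA * (A - B)‖ * ‖RB‖ := norm_mul_le _ _
              _ ≤ ‖FA‖ * ‖A - B‖ * ‖RB‖ := by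
                  have := norm_mul_le FA (A - B)
                  exact mul_le_mul_of_nonneg_right this (norm_nonneg _)
          linarith
      _ ≤ Mf * (Ch * ‖A - B‖) + Ck * ‖A - B‖ * Mh + Mf * ‖A - B‖ * Mh := by
          have b1 : ‖FA‖ * ‖HA - HB‖ ≤ Mf * (Ch * ‖A - B‖) :=
            mul_le_mul nFA nH (norm_nonneg _) hMf0
          have b2 : ‖KA - KB‖ * ‖RB‖ ≤ Ck * ‖A - B‖ * Mh :=
            mul_le_mul nK nRB (norm_nonneg _) (by positivity)
          have b3 : ‖FA‖ * ‖A - B‖ * ‖RB‖ ≤ Mf * ‖A - B‖ * Mh :=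
            mul_le_mul (mul_le_mul_of_nonneg_right nFA nAB) nRB (norm_nonneg _)
              (by positivity)
          linarith
      _ = (Mf * Ch + Ck * Mh + Mf * Mh) * ‖A - B‖ := by ring
  · -- (c) ⇒ (b)
    intro hm
    have h0 : OperatorLipschitz.{u} (fun x : ℝ => (x : ℂ) + I) := by
      refine ⟨1, zero_le_one, ?_⟩
      intro H _ _ _ A B hA hB
      rw [opFC_add_I A hA, opFC_add_I B hB]
      simp
    have := hm _ h0
    obtain ⟨C, hC0, hC⟩ := this
    refine ⟨C, hC0, ?_⟩
    intro H _ _ _ A B hA hB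
    have e : opFC (fun x : ℝ => ((x : ℂ) + I) * f x) (A := A)
        = opFC (fun x : ℝ => f x * ((x : ℂ) + I)) (A := A) :=
      opFC_congr (fun x => mul_comm _ _) A
    rw [opFC_congr (g₂ := fun x : ℝ => f x * ((x : ℂ) + I)) (fun x => mul_comm _ _) A,
      opFC_congr (g₂ := fun x : ℝ => f x * ((x : ℂ) + I)) (fun x => mul_comm _ _) B]
    exact hC H _ _ _ A B hA hB
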